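/- arXiv:2302.06021 — 3 statements merged into one kernel-verified Lean document; each statement's English description precedes it below -/
import Mathlib

section
/- Let G be a finite connected simple graph on n ≥ 2 vertices whose resistance curvature is nonnegative (κ_i ≥ 0 for all i) with Σ_{v∈V} κ_v > 0. Then for every probability measure μ on V (i.e., μ : V → ℝ with μ(v) ≥ 0 and Σ_v μ(v) = 1) there exist vertices a and b such that Σ_{v∈V} Ω_{av}·μ(v) ≤ 1/(Σ_{v∈V} κ_v) ≤ Σ_{v∈V} Ω_{bv}·μ(v). -/
open Finset SimpleGraph Matrix

/-- The resistance matrix of a graph: `Ω i j = Γ⁻¹ i i + Γ⁻¹ j j - 2 Γ⁻¹ i j`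
where `Γ = L + (1/n) J` with `L` the Laplacian and `J` the all-ones matrix. -/
noncomputable def resistanceMatrix {V : Type*} [Fintype V] [DecidableEq V]
    (G : SimpleGraph V) [DecidableRel G.Adj] : Matrix V V ℝ :=
  Matrix.of fun i j =>
    letI Γinv := (G.lapMatrix ℝ + Matrix.of fun _ _ => (1 : ℝ) / Fintype.card V)⁻¹
    Γinv i i + Γinv j j - 2 * Γinv i j

lemma resistanceMatrix_symm {V : Type*} [Fintype V] [DecidableEq V]
    (G : SimpleGraph V) [DecidableRel G.Adj] (i j : V) :
    resistanceMatrix G i j = resistanceMatrix G j i := by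
  have hΓ : (G.lapMatrix ℝ + Matrix.of fun _ _ => (1 : ℝ) / Fintype.card V).IsSymm := by
    apply Matrix.IsSymm.add (SimpleGraph.isSymm_lapMatrix (R := ℝ) G)
    ext a b
    simp [Matrix.transpose_apply]
  have hinv : ((G.lapMatrix ℝ + Matrix.of fun _ _ => (1 : ℝ) / Fintype.card V)⁻¹).IsSymm := by
    unfold Matrix.IsSymm
    rw [Matrix.transpose_nonsing_inv, hΓ]
  have h := congrFun (congrFun hinv i) j
  simp only [Matrix.transpose_apply] at h
  simp only [resistanceMatrix, Matrix.of_apply]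
  rw [← h]
  ring

/-- Minimax theorem for graphs with nonnegative resistance curvature: for every
probability measure `μ` on the vertices there are vertices `a, b` with
`∑ v, Ω a v · μ v ≤ 1/(∑ κ) ≤ ∑ v, Ω b v · μ v`. -/
theorem exists_minimax_vertices_of_nonneg_curvature
    {V : Type*} [Fintype V] [DecidableEq V]
    (G : SimpleGraph V) [DecidableRel G.Adj]
    (hconn : G.Connected) (hn : 2 ≤ Fintype.card V)
    (κ : V → ℝ) (hκ : resistanceMatrix G *ᵥ κ = fun _ => 1)
    (hcurv : ∀ i, 0 ≤ κ i) (hsum : 0 < ∑ v, κ v)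
    (μ : V → ℝ) (hμ0 : ∀ v, 0 ≤ μ v) (hμ1 : ∑ v, μ v = 1) :
    ∃ a b : V,
      ∑ v, resistanceMatrix G a v * μ v ≤ (∑ v, κ v)⁻¹ ∧
      (∑ v, κ v)⁻¹ ≤ ∑ v, resistanceMatrix G b v * μ v := by
  set Ω := resistanceMatrix G with hΩ
  set f : V → ℝ := fun i => ∑ v, Ω i v * μ v with hf
  have hrow : ∀ i, ∑ j, Ω i j * κ j = 1 := fun i => by
    have := congrFun hκ i
    simpa [Matrix.mulVec, dotProduct] using this
  have hkey : ∑ i, κ i * f i = 1 := by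
    calc ∑ i, κ i * f i = ∑ i, ∑ v, κ i * (Ω i v * μ v) := by
          simp [hf, Finset.mul_sum]
      _ = ∑ v, ∑ i, κ i * (Ω i v * μ v) := Finset.sum_comm
      _ = ∑ v, μ v * ∑ i, Ω v i * κ i := by
          refine Finset.sum_congr rfl fun v _ => ?_
          rw [Finset.mul_sum]
          refine Finset.sum_congr rfl fun i _ => ?_
          rw [show Ω i v = Ω v i from resistanceMatrix_symm G i v]
          ring
      _ = ∑ v, μ v := by simp [hrow]
      _ = 1 := hμ1
  set S := ∑ v, κ v with hS
  have hS0 : S ≠ 0 := ne_of_gt hsum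
  obtain ⟨j, hj⟩ : ∃ j, 0 < κ j := by
    by_contra h
    push_neg at h
    have : S ≤ 0 := Finset.sum_nonpos (fun i _ => h i)
    linarith
  have ha : ∃ a, f a ≤ S⁻¹ := by
    by_contra h
    push_neg at h
    have hlt : ∑ i, κ i * S⁻¹ < ∑ i, κ i * f i := by
      refine Finset.sum_lt_sum (fun i _ => ?_) ⟨j, Finset.mem_univ j, ?_⟩
      · exact mul_le_mul_of_nonneg_left (le_of_lt (h i)) (hcurv i)
      · exact mul_lt_mul_of_pos_left (h j) hj
    rw [← Finset.sum_mul, ← hS, mul_inv_cancel₀ hS0, hkey] at hlt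
    exact lt_irrefl 1 hlt
  have hb : ∃ b, S⁻¹ ≤ f b := by
    by_contra h
    push_neg at h
    have hlt : ∑ i, κ i * f i < ∑ i, κ i * S⁻¹ := by
      refine Finset.sum_lt_sum (fun i _ => ?_) ⟨j, Finset.mem_univ j, ?_⟩
      · exact mul_le_mul_of_nonneg_left (le_of_lt (h i)) (hcurv i)
      · exact mul_lt_mul_of_pos_left (h j) hj
    rw [← Finset.sum_mul, ← hS, mul_inv_cancel₀ hS0, hkey] at hlt
    exact lt_irrefl 1 hlt
  obtain ⟨a, ha⟩ := ha
  obtain ⟨b, hb⟩ := hb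
  exact ⟨a, b, ha, hb⟩
end

section
/- Let G be a finite connected simple graph on n ≥ 2 vertices whose resistance curvature satisfies K ≤ κ_i ≤ K₂ for all vertices i, with K > 0. Then the Kirchhoff index Kf(G) = Σ_{i<j} Ω_{ij} satisfies n/(2K₂) ≤ Kf(G) ≤ n/(2K). -/
open Finset SimpleGraph Matrix

section aux

variable {n : ℕ} (G : SimpleGraph (Fin n)) [DecidableRel G.Adj]

/-- The matrix Γ. -/
noncomputable def auxGamma : Matrix (Fin n) (Fin n) ℝ :=
  G.lapMatrix ℝ + Matrix.of fun _ _ => (1 : ℝ) / Fintype.card (Fin n)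

lemma auxGamma_isSymm : (auxGamma G)ᵀ = auxGamma G := by
  have h1 : (G.lapMatrix ℝ)ᵀ = G.lapMatrix ℝ := G.isSymm_lapMatrix (R := ℝ)
  have h2 : ((Matrix.of fun _ _ => (1 : ℝ) / Fintype.card (Fin n) : Matrix (Fin n) (Fin n) ℝ))ᵀ
      = (Matrix.of fun _ _ => (1 : ℝ) / Fintype.card (Fin n) : Matrix (Fin n) (Fin n) ℝ) := by
    ext i j; simp [Matrix.transpose_apply]
  unfold auxGamma
  rw [Matrix.transpose_add, h1, h2]

lemma auxGamma_posSemidef : (auxGamma G).PosSemidef := by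
  rw [Matrix.posSemidef_iff_dotProduct_mulVec]
  constructor
  · rw [Matrix.IsHermitian, Matrix.conjTranspose_eq_transpose_of_trivial,
      auxGamma_isSymm G]
  · intro x
    have h1 := (G.posSemidef_lapMatrix ℝ).dotProduct_mulVec_nonneg x
    have h2 : (0:ℝ) ≤ star x ⬝ᵥ ((Matrix.of fun _ _ => (1 : ℝ) / Fintype.card (Fin n)) *ᵥ x) := by
      have heq : star x ⬝ᵥ ((Matrix.of fun _ _ => (1 : ℝ) / Fintype.card (Fin n)) *ᵥ x)
          = ((1 : ℝ) / Fintype.card (Fin n)) * (∑ i, x i) ^ 2 := by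
        simp only [star_trivial, Matrix.mulVec, dotProduct, Matrix.of_apply]
        simp only [← Finset.mul_sum]
        rw [← Finset.sum_mul]
        ring
      rw [heq]
      positivity
    unfold auxGamma
    rw [Matrix.add_mulVec, dotProduct_add]
    exact add_nonneg h1 h2

lemma auxGammaInv_symm (i j : Fin n) : (auxGamma G)⁻¹ i j = (auxGamma G)⁻¹ j i := by
  have h : ((auxGamma G)⁻¹)ᵀ = (auxGamma G)⁻¹ := by
    rw [Matrix.transpose_nonsing_inv, auxGamma_isSymm G]
  calc (auxGamma G)⁻¹ i j = ((auxGamma G)⁻¹)ᵀ j i := rfl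
    _ = (auxGamma G)⁻¹ j i := by rw [h]

lemma auxGammaInv_posSemidef (hdet : IsUnit (auxGamma G).det) :
    ∀ x : Fin n → ℝ, 0 ≤ x ⬝ᵥ ((auxGamma G)⁻¹ *ᵥ x) := by
  intro x
  have hx : (auxGamma G) *ᵥ ((auxGamma G)⁻¹ *ᵥ x) = x := by
    rw [Matrix.mulVec_mulVec, Matrix.mul_nonsing_inv _ hdet, Matrix.one_mulVec]
  calc (0:ℝ) ≤ star ((auxGamma G)⁻¹ *ᵥ x) ⬝ᵥ ((auxGamma G) *ᵥ ((auxGamma G)⁻¹ *ᵥ x)) :=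
      (auxGamma_posSemidef G).dotProduct_mulVec_nonneg _
    _ = x ⬝ᵥ ((auxGamma G)⁻¹ *ᵥ x) := by rw [hx, star_trivial, dotProduct_comm]

lemma resistanceMatrix_eq (i j : Fin n) :
    resistanceMatrix G i j =
      (auxGamma G)⁻¹ i i + (auxGamma G)⁻¹ j j - 2 * (auxGamma G)⁻¹ i j := rfl

lemma resistanceMatrix_nonneg (hdet : IsUnit (auxGamma G).det) (i j : Fin n) :
    0 ≤ resistanceMatrix G i j := by
  have key := auxGammaInv_posSemidef G hdet (Pi.single i 1 - Pi.single j 1)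
  have expand : (Pi.single i 1 - Pi.single j 1) ⬝ᵥ
        ((auxGamma G)⁻¹ *ᵥ (Pi.single i 1 - Pi.single j 1))
      = (auxGamma G)⁻¹ i i + (auxGamma G)⁻¹ j j
        - (auxGamma G)⁻¹ i j - (auxGamma G)⁻¹ j i := by
    rw [Matrix.mulVec_sub, Matrix.mulVec_single, Matrix.mulVec_single]
    rw [sub_dotProduct, dotProduct_sub, dotProduct_sub]
    simp [single_dotProduct]
    ring
  rw [expand] at key
  rw [resistanceMatrix_eq]
  have hsym := auxGammaInv_symm G i j
  linarith

lemma resistanceMatrix_symm_s10 (i j : Fin n) :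
    resistanceMatrix G i j = resistanceMatrix G j i := by
  rw [resistanceMatrix_eq, resistanceMatrix_eq, auxGammaInv_symm G i j]
  ring

lemma resistanceMatrix_diag (i : Fin n) : resistanceMatrix G i i = 0 := by
  rw [resistanceMatrix_eq]; ring

end aux

/-- Two-sided bound on the Kirchhoff index `Kf(G) = ∑_{i<j} Ω i j` for a graph with
resistance curvature between `K > 0` and `K₂`: `n/(2 K₂) ≤ Kf(G) ≤ n/(2 K)`. -/
theorem kirchhoffIndex_bounds_of_curvature_bounds
    (n : ℕ) (hn : 2 ≤ n)
    (G : SimpleGraph (Fin n)) [DecidableRel G.Adj]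
    (hconn : G.Connected)
    (κ : Fin n → ℝ) (hκ : resistanceMatrix G *ᵥ κ = fun _ => 1)
    (K K₂ : ℝ) (hK : 0 < K) (hcurv : ∀ i, K ≤ κ i ∧ κ i ≤ K₂) :
    (n : ℝ) / (2 * K₂) ≤ ∑ i, ∑ j ∈ Finset.Ioi i, resistanceMatrix G i j ∧
    ∑ i, ∑ j ∈ Finset.Ioi i, resistanceMatrix G i j ≤ (n : ℝ) / (2 * K) := by
  haveI : NeZero n := ⟨by omega⟩
  -- Γ is invertible
  have hdet : IsUnit (auxGamma G).det := by
    by_contra h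
    have hz : (auxGamma G)⁻¹ = 0 := Matrix.nonsing_inv_apply_not_isUnit _ h
    have hrow : ∀ j, resistanceMatrix G 0 j = 0 := by
      intro j
      rw [resistanceMatrix_eq, hz]
      simp
    have h1 := congrFun hκ 0
    simp only [Matrix.mulVec, dotProduct] at h1
    rw [Finset.sum_eq_zero (fun j _ => by rw [hrow j, zero_mul])] at h1
    exact one_ne_zero h1.symm
  have hdiag : ∀ i, resistanceMatrix G i i = 0 := resistanceMatrix_diag G
  have hsymm : ∀ i j, resistanceMatrix G i j = resistanceMatrix G j i :=
    resistanceMatrix_symm_s10 G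
  have hnn : ∀ i j, 0 ≤ resistanceMatrix G i j := resistanceMatrix_nonneg G hdet
  -- K₂ > 0
  have hK₂ : 0 < K₂ := lt_of_lt_of_le hK (le_trans (hcurv 0).1 (hcurv 0).2)
  -- total sum identity: ∑_j (∑_i Ω i j) κ j = n
  have hsum : ∑ j, (∑ i, resistanceMatrix G i j) * κ j = (n : ℝ) := by
    have hrow1 : ∀ i, ∑ j, resistanceMatrix G i j * κ j = 1 := by
      intro i
      have := congrFun hκ i
      simpa [Matrix.mulVec, dotProduct] using this
    calc ∑ j, (∑ i, resistanceMatrix G i j) * κ j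
        = ∑ j, ∑ i, resistanceMatrix G i j * κ j := by
          simp [Finset.sum_mul]
      _ = ∑ i, ∑ j, resistanceMatrix G i j * κ j := Finset.sum_comm
      _ = ∑ i, (1:ℝ) := Finset.sum_congr rfl (fun i _ => hrow1 i)
      _ = (n : ℝ) := by simp
  -- column sums are nonnegative
  have hcol : ∀ j, 0 ≤ ∑ i, resistanceMatrix G i j :=
    fun j => Finset.sum_nonneg fun i _ => hnn i j
  -- total sum = 2 * Kirchhoff index
  set S := ∑ i, ∑ j ∈ Finset.Ioi i, resistanceMatrix G i j with hS
  have hT : ∑ j, ∑ i, resistanceMatrix G i j = 2 * S := by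
    have hrowsplit : ∀ i, ∑ j, resistanceMatrix G i j =
        ∑ j ∈ Finset.Ioi i, resistanceMatrix G i j
          + ∑ j ∈ Finset.Iio i, resistanceMatrix G i j := by
      intro i
      have hset : (Finset.univ : Finset (Fin n)).erase i
          = Finset.Ioi i ∪ Finset.Iio i := by
        ext x
        simp only [Finset.mem_erase, Finset.mem_univ, and_true, Finset.mem_union,
          Finset.mem_Ioi, Finset.mem_Iio, Fin.lt_def, Fin.ext_iff, ne_eq]
        omega
      have h1 : ∑ j ∈ (Finset.univ : Finset (Fin n)).erase i, resistanceMatrix G i j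
          + resistanceMatrix G i i = ∑ j, resistanceMatrix G i j :=
        Finset.sum_erase_add _ _ (Finset.mem_univ i)
      have h2 : ∑ j ∈ (Finset.univ : Finset (Fin n)).erase i, resistanceMatrix G i j
          = ∑ j ∈ Finset.Ioi i, resistanceMatrix G i j
            + ∑ j ∈ Finset.Iio i, resistanceMatrix G i j := by
        rw [hset, Finset.sum_union (Finset.disjoint_Ioi_Iio i)]
      have h3 := hdiag i
      linarith
    have hswap : ∑ i, ∑ j ∈ Finset.Iio i, resistanceMatrix G i j
        = ∑ i, ∑ j ∈ Finset.Ioi i, resistanceMatrix G i j := by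
      rw [Finset.sum_comm' (s := Finset.univ) (t := fun i => Finset.Iio i) (s' := fun j => Finset.Ioi j) (t' := Finset.univ)
        (f := fun i j => resistanceMatrix G i j)
        (by intro i j; simp [Finset.mem_Iio, Finset.mem_Ioi])]
      exact Finset.sum_congr rfl fun j _ =>
        Finset.sum_congr rfl fun i _ => (hsymm j i).symm
    calc ∑ j, ∑ i, resistanceMatrix G i j
        = ∑ i, ∑ j, resistanceMatrix G i j := Finset.sum_comm
      _ = ∑ i, (∑ j ∈ Finset.Ioi i, resistanceMatrix G i j
            + ∑ j ∈ Finset.Iio i, resistanceMatrix G i j) :=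
          Finset.sum_congr rfl (fun i _ => hrowsplit i)
      _ = S + ∑ i, ∑ j ∈ Finset.Iio i, resistanceMatrix G i j := by
          rw [Finset.sum_add_distrib]
      _ = 2 * S := by rw [hswap]; ring
  -- bounds
  have hub : (n : ℝ) ≤ 2 * S * K₂ := by
    calc (n : ℝ) = ∑ j, (∑ i, resistanceMatrix G i j) * κ j := hsum.symm
      _ ≤ ∑ j, (∑ i, resistanceMatrix G i j) * K₂ :=
          Finset.sum_le_sum (fun j _ =>
            mul_le_mul_of_nonneg_left (hcurv j).2 (hcol j))
      _ = 2 * S * K₂ := by rw [← Finset.sum_mul, hT]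
  have hlb : 2 * S * K ≤ (n : ℝ) := by
    calc 2 * S * K = ∑ j, (∑ i, resistanceMatrix G i j) * K := by
          rw [← Finset.sum_mul, hT]
      _ ≤ ∑ j, (∑ i, resistanceMatrix G i j) * κ j :=
          Finset.sum_le_sum (fun j _ =>
            mul_le_mul_of_nonneg_left (hcurv j).1 (hcol j))
      _ = (n : ℝ) := hsum
  constructor
  · rw [div_le_iff₀ (by positivity)]
    linarith
  · rw [le_div_iff₀ (by positivity)]
    linarith
end

section
/- Let G be a finite connected simple graph on n ≥ 2 vertices whose resistance curvature satisfies κ_i ≥ K for all vertices i, for some K > 0. Then K ≤ (1/2)·n/(n−1). -/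
open Finset SimpleGraph Matrix

section Aux

variable {V : Type*} [Fintype V] [DecidableEq V]

lemma gamma_posDef (G : SimpleGraph V) [DecidableRel G.Adj] (hconn : G.Connected) :
    (G.lapMatrix ℝ + Matrix.of fun _ _ => (1 : ℝ) / Fintype.card V).PosDef := by
  have : Nonempty V := hconn.nonempty
  have hn : (0:ℝ) < Fintype.card V := by positivity
  rw [posDef_iff_dotProduct_mulVec]
  constructor
  · have h1 := G.isSymm_lapMatrix (R := ℝ)
    rw [Matrix.IsHermitian, conjTranspose_eq_transpose_of_trivial, transpose_add, h1]
    congr 1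
  · intro x hx
    rw [add_mulVec, dotProduct_add]
    have hL : (0:ℝ) ≤ star x ⬝ᵥ (G.lapMatrix ℝ *ᵥ x) := (posSemidef_lapMatrix ℝ G).dotProduct_mulVec_nonneg x
    have hJval : star x ⬝ᵥ ((Matrix.of fun _ _ => (1 : ℝ) / Fintype.card V) *ᵥ x)
        = (∑ i, x i)^2 / Fintype.card V := by
      simp only [star_trivial, dotProduct, mulVec, Matrix.of_apply]
      rw [← Finset.sum_mul, ← Finset.mul_sum]
      ring
    have hJ : (0:ℝ) ≤ star x ⬝ᵥ ((Matrix.of fun _ _ => (1 : ℝ) / Fintype.card V) *ᵥ x) := by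
      rw [hJval]; positivity
    rcases lt_or_eq_of_le hL with h | h
    · linarith
    rcases lt_or_eq_of_le hJ with h2 | h2
    · linarith
    exfalso
    apply hx
    have hconst : ∀ i j, x i = x j := by
      intro i j
      have := (G.lapMatrix_toLinearMap₂'_apply'_eq_zero_iff_forall_reachable x).mp ?_ i j
        (hconn.preconnected i j)
      · exact this
      · rw [Matrix.toLinearMap₂'_apply']; simpa using h.symm
    have hsum : (∑ i, x i) = 0 := by
      have := h2.symm
      rw [hJval] at this
      field_simp at this
      simpa using this
    ext i
    have hni : (∑ j, x j) = (Fintype.card V : ℝ) * x i := by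
      rw [Finset.sum_congr rfl (fun j _ => hconst j i)]
      simp [Finset.sum_const, nsmul_eq_mul]
    simp only [Pi.zero_apply]
    nlinarith [hni ▸ hsum]

end Aux

/-- If the resistance curvature of a connected graph on `n ≥ 2` vertices is bounded
below by `K > 0`, then `K ≤ (1/2) · n/(n-1)`. -/
theorem curvature_le_of_lower_bound
    {V : Type*} [Fintype V] [DecidableEq V]
    (G : SimpleGraph V) [DecidableRel G.Adj]
    (hconn : G.Connected) (hn : 2 ≤ Fintype.card V)
    (κ : V → ℝ) (hκ : resistanceMatrix G *ᵥ κ = fun _ => 1)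
    (K : ℝ) (hK : 0 < K) (hcurv : ∀ i, K ≤ κ i) :
    K ≤ (1 / 2) * (Fintype.card V : ℝ) / ((Fintype.card V : ℝ) - 1) := by
  have hκ : (Matrix.of fun i j =>
      letI Γinv := (G.lapMatrix ℝ + Matrix.of fun _ _ => (1 : ℝ) / Fintype.card V)⁻¹
      Γinv i i + Γinv j j - 2 * Γinv i j : Matrix V V ℝ) *ᵥ κ = fun _ => 1 := hκ
  have hne : Nonempty V := hconn.nonempty
  set n : ℝ := (Fintype.card V : ℝ) with hn'
  have hn2 : (2:ℝ) ≤ n := by rw [hn']; exact_mod_cast hn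
  set Jm : Matrix V V ℝ := Matrix.of fun _ _ => (1:ℝ)/Fintype.card V with hJm
  set Γ : Matrix V V ℝ := G.lapMatrix ℝ + Jm with hΓdef
  set g : Matrix V V ℝ := Γ⁻¹ with hgdef
  have hPD : Γ.PosDef := gamma_posDef G hconn
  have hU : IsUnit Γ.det := hPD.det_pos.ne'.isUnit
  have hΓg : Γ * g = 1 := mul_nonsing_inv Γ hU
  have hgΓ : g * Γ = 1 := nonsing_inv_mul Γ hU
  have hgPD : g.PosDef := hPD.inv
  have hsymm : ∀ i j, g i j = g j i := by
    intro i j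
    have := hgPD.isHermitian.apply j i
    simpa using this
  -- Γ *ᵥ 1 = 1
  have hΓ1 : Γ *ᵥ (fun _ => (1:ℝ)) = fun _ => 1 := by
    rw [hΓdef, add_mulVec, lapMatrix_mulVec_const_eq_zero]
    funext i
    simp only [Pi.add_apply, Pi.zero_apply, zero_add, mulVec, dotProduct, hJm,
      Matrix.of_apply, mul_one]
    rw [Finset.sum_const, nsmul_eq_mul]
    have : (0:ℝ) < Fintype.card V := by positivity
    field_simp
    rw [Finset.card_univ]
  have hg1 : g *ᵥ (fun _ => (1:ℝ)) = fun _ => 1 := by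
    conv_lhs => rw [← hΓ1]
    rw [mulVec_mulVec, hgΓ, one_mulVec]
  have hrow : ∀ i, ∑ j, g i j = 1 := by
    intro i
    have := congrFun hg1 i
    simpa [mulVec, dotProduct] using this
  -- nonnegativity of Ω entries
  have hΩnn : ∀ i j, 0 ≤ g i i + g j j - 2 * g i j := by
    intro i j
    rcases eq_or_ne i j with rfl | hij
    · ring_nf; exact le_refl 0
    have h := hgPD.posSemidef.dotProduct_mulVec_nonneg (Pi.single i 1 - Pi.single j 1)
    have hx : star (Pi.single i (1:ℝ) - Pi.single j 1) ⬝ᵥ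
        (g *ᵥ (Pi.single i 1 - Pi.single j 1))
        = g i i + g j j - 2 * g i j := by
      rw [star_trivial, mulVec_sub, mulVec_single, mulVec_single, sub_dotProduct,
        single_dotProduct, single_dotProduct]
      simp only [Pi.sub_apply, mul_one, Pi.smul_apply, MulOpposite.op_one, one_smul,
        Matrix.col_apply, one_mul]
      rw [hsymm j i]
      ring
    rw [hx] at h
    exact h
  -- trace identities
  have htr1 : Matrix.trace (Γ * g) = n := by
    rw [hΓg, Matrix.trace_one, hn']
  have htrJ : Matrix.trace (Jm * g) = 1 := by
    rw [Matrix.trace]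
    have : ∀ i, (Jm * g).diag i = (1:ℝ)/Fintype.card V := by
      intro i
      simp only [Matrix.diag_apply, Matrix.mul_apply, hJm, Matrix.of_apply]
      rw [← Finset.mul_sum]
      have : ∑ k, g k i = 1 := by
        rw [Finset.sum_congr rfl (fun k _ => hsymm k i)]
        exact hrow i
      rw [this, mul_one]
    rw [Finset.sum_congr rfl (fun i _ => this i), Finset.sum_const, nsmul_eq_mul]
    have hcard : (0:ℝ) < Fintype.card V := by positivity
    field_simp
    rw [Finset.card_univ]
  have htrL : Matrix.trace (G.lapMatrix ℝ * g) = n - 1 := by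
    have hL : G.lapMatrix ℝ = Γ - Jm := by rw [hΓdef]; exact (add_sub_cancel_right _ _).symm
    rw [hL, Matrix.sub_mul, Matrix.trace_sub, htr1, htrJ]
  -- trace(L*g) as a sum
  have hdegsum : ∀ i : V, ∑ j, (if G.Adj i j then (1:ℝ) else 0) = G.degree i := by
    intro i
    rw [Finset.sum_boole]
    congr 1
    rw [SimpleGraph.degree]
    congr 1
    ext j
    simp [SimpleGraph.mem_neighborFinset]
  have htrL_sum : Matrix.trace (G.lapMatrix ℝ * g)
      = ∑ i, (G.degree i : ℝ) * g i i - ∑ i, ∑ j, (if G.Adj i j then (1:ℝ) else 0) * g i j := by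
    rw [Matrix.trace]
    simp only [Matrix.diag_apply, Matrix.mul_apply, SimpleGraph.lapMatrix,
      Matrix.sub_apply, SimpleGraph.degMatrix, Matrix.diagonal_apply,
      SimpleGraph.adjMatrix_apply, sub_mul]
    rw [Finset.sum_sub_distrib]
    congr 1
    · refine Finset.sum_congr rfl fun i _ => ?_
      rw [Finset.sum_eq_single i]
      · simp
      · intro b _ hb; simp [hb.symm]
      · simp
    · refine Finset.sum_congr rfl fun i _ => ?_
      refine Finset.sum_congr rfl fun j _ => ?_
      rw [hsymm j i]
  -- the edge sum equals 2 (n-1)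
  have hedge : ∑ i, ∑ j, (if G.Adj i j then (g i i + g j j - 2 * g i j) else 0)
      = 2 * (n - 1) := by
    have expand : ∀ i j : V, (if G.Adj i j then (g i i + g j j - 2 * g i j) else 0)
        = (if G.Adj i j then (1:ℝ) else 0) * g i i
          + (if G.Adj i j then (1:ℝ) else 0) * g j j
          - 2 * ((if G.Adj i j then (1:ℝ) else 0) * g i j) := by
      intro i j; split <;> ring
    simp only [expand]
    rw [Finset.sum_congr rfl fun i _ => Finset.sum_sub_distrib _ _,
        Finset.sum_congr rfl fun i _ => congrArg₂ (· - ·)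
          (Finset.sum_add_distrib) rfl,
        Finset.sum_sub_distrib, Finset.sum_add_distrib]
    have e1 : ∑ i, ∑ j, (if G.Adj i j then (1:ℝ) else 0) * g i i
        = ∑ i, (G.degree i : ℝ) * g i i := by
      refine Finset.sum_congr rfl fun i _ => ?_
      rw [← Finset.sum_mul, hdegsum]
    have e2 : ∑ i, ∑ j, (if G.Adj i j then (1:ℝ) else 0) * g j j
        = ∑ i, (G.degree i : ℝ) * g i i := by
      rw [Finset.sum_comm]
      refine Finset.sum_congr rfl fun j _ => ?_
      rw [← Finset.sum_mul]
      congr 1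
      rw [← hdegsum j]
      refine Finset.sum_congr rfl fun i _ => ?_
      simp only [G.adj_comm i j]
    have e3 : ∑ i, ∑ j, 2 * ((if G.Adj i j then (1:ℝ) else 0) * g i j)
        = 2 * ∑ i, ∑ j, (if G.Adj i j then (1:ℝ) else 0) * g i j := by
      rw [Finset.mul_sum]
      exact Finset.sum_congr rfl fun i _ => (Finset.mul_sum _ _ _).symm
    rw [e1, e2, e3]
    have := htrL_sum ▸ htrL
    linarith
  -- row equations from hκ
  have hκrow : ∀ i, ∑ j, (g i i + g j j - 2 * g i j) * κ j = 1 := by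
    intro i
    have := congrFun hκ i
    simpa [mulVec, dotProduct, hgdef, hΓdef, hJm] using this
  -- each row: K * row sum of Ω ≤ 1
  have hrowK : ∀ i, K * ∑ j, (g i i + g j j - 2 * g i j) ≤ 1 := by
    intro i
    rw [Finset.mul_sum]
    rw [← hκrow i]
    refine Finset.sum_le_sum fun j _ => ?_
    rw [mul_comm]
    exact mul_le_mul_of_nonneg_left (hcurv j) (hΩnn i j)
  -- sum over i
  have hsumΩ : K * ∑ i, ∑ j, (g i i + g j j - 2 * g i j) ≤ n := by
    rw [Finset.mul_sum]
    calc ∑ i, K * ∑ j, (g i i + g j j - 2 * g i j) ≤ ∑ i : V, (1:ℝ) :=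
          Finset.sum_le_sum fun i _ => hrowK i
      _ = n := by rw [Finset.sum_const, nsmul_eq_mul, mul_one, hn', Finset.card_univ]
  have hcomp : 2 * (n - 1) ≤ ∑ i, ∑ j, (g i i + g j j - 2 * g i j) := by
    rw [← hedge]
    refine Finset.sum_le_sum fun i _ => Finset.sum_le_sum fun j _ => ?_
    split
    · exact le_refl _
    · exact hΩnn i j
  have hfin : K * (2 * (n - 1)) ≤ n := by
    calc K * (2 * (n - 1)) ≤ K * ∑ i, ∑ j, (g i i + g j j - 2 * g i j) :=
          mul_le_mul_of_nonneg_left hcomp hK.le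
      _ ≤ n := hsumΩ
  rw [le_div_iff₀ (by linarith : (0:ℝ) < n - 1)]
  linarith
end
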